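/- Let n, m be positive integers and let G = ℤ/n × ℤ/m. Then the second group cohomology of G with coefficients in the trivial G-module ℂˣ (the multiplicative group of nonzero complex numbers, viewed additively as a ℤ-module with trivial G-action) is isomorphic as an abelian group to ℤ/gcd(n,m): H²(ℤ/n × ℤ/m, ℂˣ) ≅ ℤ/gcd(n,m). -/

import Mathlib

open groupCohomology

section trivco

variable {G M : Type*} [CommGroup G] [AddCommGroup M] {f : G × G → M}

/-- The 2-cocycle condition for the trivial action. -/
def IsTrivCo (f : G × G → M) : Prop :=
  ∀ g h j : G, f (g * h, j) + f (g, h) = f (h, j) + f (g, h * j)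

theorem trivco_one_fst (hf : IsTrivCo f) (g : G) : f (1, g) = f (1, 1) := by
  have := hf 1 1 g; simpa using this.symm

theorem trivco_one_snd (hf : IsTrivCo f) (g : G) : f (g, 1) = f (1, 1) := by
  have := hf g 1 1; simpa using this

/-- The antisymmetrization of a 2-cochain. -/
def bf (f : G × G → M) (x y : G) : M := f (x, y) - f (y, x)

omit [CommGroup G] in
theorem bf_anti (x y : G) : bf f x y = - bf f y x := (neg_sub _ _).symm

theorem bf_mul_left (hf : IsTrivCo f) (x y z : G) :
    bf f (x * y) z = bf f x z + bf f y z := by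
  show f (x * y, z) - f (z, x * y) = (f (x, z) - f (z, x)) + (f (y, z) - f (z, y))
  have e1 := hf x y z
  have e2 := hf z x y
  have e3 := hf x z y
  rw [mul_comm z x] at e2
  rw [mul_comm z y] at e3
  linear_combination (norm := abel1) e1 + e2 - e3

theorem bf_mul_right (hf : IsTrivCo f) (x y z : G) :
    bf f x (y * z) = bf f x y + bf f x z := by
  rw [bf_anti x (y * z), bf_mul_left hf, bf_anti y x, bf_anti z x]; abel

theorem bf_one_left (hf : IsTrivCo f) (y : G) : bf f 1 y = 0 := by
  show f (1, y) - f (y, 1) = 0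
  rw [trivco_one_fst hf y, trivco_one_snd hf y]
  exact sub_self _

theorem bf_one_right (hf : IsTrivCo f) (x : G) : bf f x 1 = 0 := by
  rw [bf_anti, bf_one_left hf, neg_zero]

theorem bf_pow_left (hf : IsTrivCo f) (x y : G) (i : ℕ) :
    bf f (x ^ i) y = i • bf f x y := by
  induction i with
  | zero => simpa using bf_one_left hf y
  | succ k ih => rw [pow_succ, bf_mul_left hf, ih, succ_nsmul]

theorem bf_pow_right (hf : IsTrivCo f) (x y : G) (i : ℕ) :
    bf f x (y ^ i) = i • bf f x y := by
  rw [bf_anti, bf_pow_left hf, bf_anti y x]; simp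

/-- Wrapper type for the abelian extension of `G` by `M` determined by a symmetric
2-cocycle `f`. -/
structure ExtC (f : G × G → M) where
  g : G
  a : M

/-- A symmetric 2-cocycle for the trivial action, with values in a "Baer" (divisible)
group, is a coboundary. -/
theorem symm_trivco_coboundary (hB : Module.Baer ℤ M) (hf : IsTrivCo f)
    (hsym : ∀ x y : G, f (x, y) = f (y, x)) :
    ∃ x : G → M, ∀ g h, x h - x (g * h) + x g = f (g, h) := by
  -- reduce to the normalized case
  wlog hnorm : f (1, 1) = 0 with H
  · set c := f (1, 1) with hc
    obtain ⟨x, hx⟩ := H (f := fun p => f p - c) hB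
      (fun g h j => by have := hf g h j; dsimp only; linear_combination (norm := abel1) this)
      (fun x y => by rw [hsym]) (sub_eq_zero_of_eq rfl)
    exact ⟨fun g => x g + c, fun g h => by
      have := hx g h; dsimp only at this ⊢; linear_combination (norm := abel1) this⟩
  have h1g : ∀ g : G, f (1, g) = 0 := fun g => (trivco_one_fst hf g).trans hnorm
  have hg1 : ∀ g : G, f (g, 1) = 0 := fun g => (trivco_one_snd hf g).trans hnorm
  have ext : ∀ {x y : ExtC f}, x.g = y.g → x.a = y.a → x = y := by
    rintro ⟨a,b⟩ ⟨c,d⟩ h1 h2; cases h1; cases h2; rfl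
  letI : Zero (ExtC f) := ⟨⟨1, 0⟩⟩
  letI : Add (ExtC f) := ⟨fun x y => ⟨x.g * y.g, x.a + y.a + f (x.g, y.g)⟩⟩
  letI : Neg (ExtC f) := ⟨fun x => ⟨x.g⁻¹, -x.a - f (x.g, x.g⁻¹)⟩⟩
  have hadd : ∀ x y : ExtC f, x + y = ⟨x.g * y.g, x.a + y.a + f (x.g, y.g)⟩ := fun _ _ => rfl
  letI : AddCommGroup (ExtC f) :=
    { add := (· + ·)
      zero := 0
      neg := Neg.neg
      add_assoc := fun x y z =>
        ext (mul_assoc _ _ _) (by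
          show x.a + y.a + f (x.g, y.g) + z.a + f (x.g * y.g, z.g)
              = x.a + (y.a + z.a + f (y.g, z.g)) + f (x.g, y.g * z.g)
          linear_combination (norm := abel1) hf x.g y.g z.g)
      zero_add := fun x => ext (one_mul _) (by show 0 + x.a + f (1, x.g) = x.a; simp [h1g])
      add_zero := fun x => ext (mul_one _) (by show x.a + 0 + f (x.g, 1) = x.a; simp [hg1])
      neg_add_cancel := fun x => ext (inv_mul_cancel _)
        (by show -x.a - f (x.g, x.g⁻¹) + x.a + f (x.g⁻¹, x.g) = 0; rw [hsym]; abel)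
      add_comm := fun x y => ext (mul_comm _ _)
        (by show x.a + y.a + f (x.g, y.g) = y.a + x.a + f (y.g, x.g); rw [hsym]; abel)
      nsmul := nsmulRec
      zsmul := zsmulRec }
  let i : M →+ ExtC f :=
    { toFun := fun a => ⟨1, a⟩
      map_zero' := rfl
      map_add' := fun a b => by
        apply ext
        · exact (one_mul 1).symm
        · show a + b = a + b + f (1, 1); rw [hnorm]; abel }
  have hi : Function.Injective i := fun a b hab => congrArg ExtC.a hab
  obtain ⟨r, hr⟩ := hB.extension_property_addMonoidHom i hi (AddMonoidHom.id M)
  have hra : ∀ a : M, r ⟨1, a⟩ = a := fun a => congrArg (fun φ => φ a) hr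
  refine ⟨fun g => r ⟨g, 0⟩, fun g h => ?_⟩
  have key : (⟨g, 0⟩ : ExtC f) + ⟨h, 0⟩ = (⟨g * h, 0⟩ : ExtC f) + ⟨1, f (g, h)⟩ := by
    rw [hadd, hadd]
    congr 1
    · exact (mul_one _).symm
    · simp [hg1]
  have := congrArg r key
  rw [map_add, map_add, hra] at this
  linear_combination (norm := abel1) this

end trivco

noncomputable instance : RootableBy ℂˣ ℕ :=
  rootableByOfPowLeftSurj _ _ (fun {k} hk x => by
    obtain ⟨z, hz⟩ := IsAlgClosed.exists_pow_nat_eq (x : ℂ) (Nat.pos_of_ne_zero hk)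
    have hz0 : z ≠ 0 := by
      intro h
      rw [h, zero_pow hk] at hz
      exact x.ne_zero hz.symm
    exact ⟨Units.mk0 z hz0, Units.ext (by simpa using hz)⟩)

noncomputable instance : RootableBy ℂˣ ℤ := Group.rootableByIntOfRootableByNat ℂˣ

noncomputable instance : DivisibleBy (Additive ℂˣ) ℤ where
  div a k := Additive.ofMul (RootableBy.root a.toMul k)
  div_zero a := congrArg Additive.ofMul (RootableBy.root_zero a.toMul)
  div_cancel {k} a hk := by
    show k • Additive.ofMul (RootableBy.root a.toMul k) = a
    rw [← ofMul_zpow, RootableBy.root_cancel _ hk, ofMul_toMul]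

theorem baer_units_complex : Module.Baer ℤ (Additive ℂˣ) :=
  Module.Baer.of_divisible _

theorem cob_iff_aux {k G : Type} [CommRing k] [Group G] (A : Rep.{0} k G) (f : G × G → A) :
    f ∈ coboundaries₂ A ↔ ∃ x : G → A, ∀ g h : G, A.ρ g (x h) - x (g * h) + x g = f (g, h) := by
  constructor
  · rintro ⟨x, hx⟩; exact ⟨x, fun g h => congrFun hx (g, h)⟩
  · rintro ⟨x, hx⟩; exact ⟨x, funext fun p => hx p.1 p.2⟩

/-- For positive integers `n, m`, the second group cohomology of
`ℤ/n × ℤ/m` with coefficients in the trivial module `ℂˣ` is isomorphic (as an abelian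
group) to `ℤ/gcd(n,m)`. -/
theorem h2_zmod_prod_units_complex (n m : ℕ) (hn : 0 < n) (hm : 0 < m) :
    Nonempty
      (groupCohomology.H2
          (Rep.trivial ℤ (Multiplicative (ZMod n × ZMod m)) (Additive ℂˣ)) ≃+
        ZMod (Nat.gcd n m)) := by
  haveI : NeZero n := ⟨hn.ne'⟩
  haveI : NeZero m := ⟨hm.ne'⟩
  have hg : 0 < Nat.gcd n m := Nat.gcd_pos_of_pos_left m hn
  haveI : NeZero (Nat.gcd n m) := ⟨hg.ne'⟩
  set G := Multiplicative (ZMod n × ZMod m) with hG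
  set A := Rep.trivial ℤ G (Additive ℂˣ) with hA
  -- a primitive gcd-th root of unity, as a unit
  obtain ⟨ζu, hζu⟩ : ∃ ζu : ℂˣ, IsPrimitiveRoot ζu (Nat.gcd n m) := by
    have h0 := Complex.isPrimitiveRoot_exp (Nat.gcd n m) hg.ne'
    exact ⟨(h0.isUnit hg.ne').unit, h0.isUnit_unit hg.ne'⟩
  -- χ : ZMod gcd →+ Additive ℂˣ
  let χ : ZMod (Nat.gcd n m) →+ Additive ℂˣ :=
    ZMod.lift _ ⟨zmultiplesHom _ (Additive.ofMul ζu), by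
      show ((Nat.gcd n m : ℤ)) • Additive.ofMul ζu = 0
      rw [← ofMul_zpow, zpow_natCast, hζu.pow_eq_one]; rfl⟩
  have hχ : ∀ j : ℤ, χ ((j : ZMod (Nat.gcd n m))) = Additive.ofMul (ζu ^ j) := fun j => by
    rw [ZMod.lift_coe]
    show j • Additive.ofMul ζu = _
    rw [← ofMul_zpow]
  have hχinj : Function.Injective χ := by
    rw [injective_iff_map_eq_zero]
    intro k hk
    have hkval : ((k.val : ℤ) : ZMod (Nat.gcd n m)) = k := by
      rw [Int.cast_natCast]; exact ZMod.natCast_rightInverse k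
    rw [← hkval, hχ] at hk
    have h1 : ζu ^ (k.val : ℤ) = 1 := hk
    rw [hζu.zpow_eq_one_iff_dvd] at h1
    have h2 : (Nat.gcd n m) ∣ k.val := Int.ofNat_dvd.mp (by exact_mod_cast h1)
    have h0 : k.val = 0 := Nat.eq_zero_of_dvd_of_lt h2 (ZMod.val_lt k)
    rw [← hkval, h0]
    simp
  -- the bilinear pairing with values in ZMod gcd
  let P : G → G → ZMod (Nat.gcd n m) := fun x y =>
    (ZMod.castHom (Nat.gcd_dvd_left n m) (ZMod (Nat.gcd n m)) (Multiplicative.toAdd y).1) *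
      (ZMod.castHom (Nat.gcd_dvd_right n m) (ZMod (Nat.gcd n m)) (Multiplicative.toAdd x).2)
  have hP1 : ∀ x y z : G, P (x * y) z = P x z + P y z := by
    intro x y z
    show _ * _ = _ * _ + _ * _
    have : (Multiplicative.toAdd (x * y)).2 = (Multiplicative.toAdd x).2
        + (Multiplicative.toAdd y).2 := rfl
    rw [this, map_add, mul_add]
  have hP2 : ∀ x y z : G, P x (y * z) = P x y + P x z := by
    intro x y z
    show _ * _ = _ * _ + _ * _
    have : (Multiplicative.toAdd (y * z)).1 = (Multiplicative.toAdd y).1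
        + (Multiplicative.toAdd z).1 := rfl
    rw [this, map_add, add_mul]
  -- the standard cocycles
  let c : ZMod (Nat.gcd n m) → (G × G → Additive ℂˣ) := fun k p => χ (k * P p.1 p.2)
  have hc_co : ∀ k, IsTrivCo (c k) := by
    intro k g h j
    show χ _ + χ _ = χ _ + χ _
    rw [← map_add, ← map_add, ← mul_add, ← mul_add, hP1, hP2]
    ring_nf
  have hc_mem : ∀ k, c k ∈ cocycles₂ A := by
    intro k
    rw [mem_cocycles₂_iff]
    intro a b d
    exact hc_co k a b d
  -- the map Φ : ZMod gcd →+ H2 A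
  let Φ : ZMod (Nat.gcd n m) →+ groupCohomology.H2 A :=
    { toFun := fun k => groupCohomology.H2π A ⟨c k, hc_mem k⟩
      map_zero' := by
        show groupCohomology.H2π A ⟨c 0, hc_mem 0⟩ = 0
        have : (⟨c 0, hc_mem 0⟩ : cocycles₂ A) = 0 := by
          ext g h
          set_option maxRecDepth 20000 in
          show χ _ = 0
          rw [zero_mul, map_zero]
        rw [this, map_zero]
      map_add' := fun k l => by
        show groupCohomology.H2π A ⟨c (k + l), hc_mem (k + l)⟩
            = groupCohomology.H2π A ⟨c k, hc_mem k⟩ + groupCohomology.H2π A ⟨c l, hc_mem l⟩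
        rw [← map_add]
        have : (⟨c (k + l), hc_mem (k + l)⟩ : cocycles₂ A)
            = ⟨c k, hc_mem k⟩ + ⟨c l, hc_mem l⟩ := by
          ext g h
          set_option maxRecDepth 20000 in
          show χ _ = χ _ + χ _
          rw [← map_add, add_mul]
        rw [this, map_add] }
  -- generators
  set x₀ : G := Multiplicative.ofAdd (1, 0) with hx₀
  set y₀ : G := Multiplicative.ofAdd (0, 1) with hy₀
  have hx0n : x₀ ^ n = 1 := by
    rw [hx₀, ← ofAdd_nsmul]
    have : n • ((1 : ZMod n), (0 : ZMod m)) = (0 : ZMod n × ZMod m) := by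
      apply Prod.ext
      · simp [nsmul_eq_mul]
      · simp
    rw [this]; rfl
  have hy0m : y₀ ^ m = 1 := by
    rw [hy₀, ← ofAdd_nsmul]
    have : m • ((0 : ZMod n), (1 : ZMod m)) = (0 : ZMod n × ZMod m) := by
      apply Prod.ext
      · simp
      · simp [nsmul_eq_mul]
    rw [this]; rfl
  -- decomposition of elements of G in terms of the generators
  have hdec : ∀ p : G, p = x₀ ^ ((Multiplicative.toAdd p).1).val
      * y₀ ^ ((Multiplicative.toAdd p).2).val := by
    intro p
    have key : ∀ (a : ZMod n) (b : ZMod m),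
        a.val • ((1 : ZMod n), (0 : ZMod m)) + b.val • ((0 : ZMod n), (1 : ZMod m)) = (a, b) := by
      intro a b
      apply Prod.ext
      · simp [nsmul_eq_mul, ZMod.natCast_val, ZMod.cast_id]
      · simp [nsmul_eq_mul, ZMod.natCast_val, ZMod.cast_id]
    conv_lhs => rw [← ofAdd_toAdd p]
    rw [hx₀, hy₀, ← ofAdd_nsmul, ← ofAdd_nsmul, ← ofAdd_add]
    exact congrArg Multiplicative.ofAdd
      (key (Multiplicative.toAdd p).1 (Multiplicative.toAdd p).2).symm
  -- the antisymmetrization functional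
  let β : (G × G → Additive ℂˣ) → Additive ℂˣ := fun F => F (x₀, y₀) - F (y₀, x₀)
  -- cocycle condition transfer
  have hco : ∀ F : cocycles₂ A, IsTrivCo (⇑F : G × G → Additive ℂˣ) := by
    intro F
    have hF := F.2
    rw [mem_cocycles₂_iff] at hF
    intro a b d
    exact hF a b d
  -- coboundaries have vanishing β
  have hβcob : ∀ F : cocycles₂ A, ⇑F ∈ coboundaries₂ A → β ⇑F = 0 := by
    intro F hF
    rw [cob_iff_aux] at hF
    obtain ⟨x, hx⟩ := hF
    have h1 : x y₀ - x (x₀ * y₀) + x x₀ = F (x₀, y₀) := hx x₀ y₀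
    have h2 : x x₀ - x (y₀ * x₀) + x y₀ = F (y₀, x₀) := hx y₀ x₀
    show F (x₀, y₀) - F (y₀, x₀) = 0
    rw [← h1, ← h2, mul_comm y₀ x₀]
    abel
  -- gcd kills β of any cocycle
  have hβtor : ∀ F : cocycles₂ A, (Nat.gcd n m : ℤ) • β ⇑F = 0 := by
    intro F
    have hf := hco F
    have hb : β ⇑F = bf ⇑F x₀ y₀ := rfl
    have hn' : (n : ℤ) • β ⇑F = 0 := by
      rw [hb, natCast_zsmul, ← bf_pow_left hf, hx0n, bf_one_left hf]
    have hm' : (m : ℤ) • β ⇑F = 0 := by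
      rw [hb, natCast_zsmul, ← bf_pow_right hf, hy0m, bf_one_right hf]
    have hgcd : (Nat.gcd n m : ℤ) = n * Nat.gcdA n m + m * Nat.gcdB n m := Nat.gcd_eq_gcd_ab n m
    rw [hgcd, add_zsmul, mul_comm (n : ℤ), mul_comm (m : ℤ), mul_zsmul, mul_zsmul, hn', hm']
    simp
  -- β of the standard cocycles
  have hβc : ∀ k, β (c k) = - χ k := by
    intro k
    have h1 : P x₀ y₀ = 0 := by
      show _ * _ = 0
      rw [hx₀, hy₀]
      simp
    have h2 : P y₀ x₀ = 1 := by
      show (ZMod.castHom (Nat.gcd_dvd_left n m) (ZMod (Nat.gcd n m))) 1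
          * (ZMod.castHom (Nat.gcd_dvd_right n m) (ZMod (Nat.gcd n m))) 1 = 1
      rw [map_one, map_one, mul_one]
    show χ (k * P x₀ y₀) - χ (k * P y₀ x₀) = - χ k
    rw [h1, h2, mul_zero, mul_one, map_zero]
    abel
  -- vanishing β forces symmetry
  have hsymm_of : ∀ F : G × G → Additive ℂˣ, IsTrivCo F → bf F x₀ y₀ = 0 →
      ∀ p q : G, F (p, q) = F (q, p) := by
    intro F hf h0 p q
    rw [← sub_eq_zero]
    have hyx : bf F y₀ x₀ = 0 := by rw [bf_anti, h0, neg_zero]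
    have hq : ∀ z : G, bf F z q = ((Multiplicative.toAdd z).1.val) • bf F x₀ q
        + ((Multiplicative.toAdd z).2.val) • bf F y₀ q := fun z => by
      conv_lhs => rw [hdec z, bf_mul_left hf, bf_pow_left hf, bf_pow_left hf]
    have hx0q : bf F x₀ q = 0 := by
      conv_lhs => rw [hdec q, bf_mul_right hf, bf_pow_right hf, bf_pow_right hf]
      rw [h0, show bf F x₀ x₀ = 0 from sub_self _]
      simp
    have hy0q : bf F y₀ q = 0 := by
      conv_lhs => rw [hdec q, bf_mul_right hf, bf_pow_right hf, bf_pow_right hf]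
      rw [hyx, show bf F y₀ y₀ = 0 from sub_self _]
      simp
    show bf F p q = 0
    rw [hq p, hx0q, hy0q]
    simp
  -- injectivity
  have hinj : Function.Injective Φ := by
    rw [injective_iff_map_eq_zero]
    intro k hk
    have hk' : groupCohomology.H2π A ⟨c k, hc_mem k⟩ = 0 := hk
    have hmem : ⇑(⟨c k, hc_mem k⟩ : cocycles₂ A) ∈ coboundaries₂ A := by
      exact (H2π_eq_zero_iff _).mp hk'
    have h0 := hβcob ⟨c k, hc_mem k⟩ hmem
    rw [show β ⇑(⟨c k, hc_mem k⟩ : cocycles₂ A) = β (c k) from rfl, hβc k, neg_eq_zero] at h0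
    exact hχinj (h0.trans (map_zero χ).symm)
  -- surjectivity
  have hsurj : Function.Surjective Φ := by
    intro q
    obtain ⟨F, rfl⟩ := (ModuleCat.epi_iff_surjective (H2π A)).mp inferInstance q
    obtain ⟨f0, hf0⟩ : ∃ f0 : G × G → Additive ℂˣ, ⇑F = f0 := ⟨⇑F, rfl⟩
    have hf : IsTrivCo f0 := hf0 ▸ hco F
    have htor : (Nat.gcd n m : ℤ) • β f0 = 0 := hf0 ▸ hβtor F
    have hpow : (Additive.toMul (β f0))⁻¹ ^ (Nat.gcd n m) = 1 := by
      have h1 := congrArg Additive.toMul htor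
      rw [toMul_zsmul] at h1
      rw [inv_pow, ← zpow_natCast]
      rw [show Additive.toMul ((0 : Additive ℂˣ)) = 1 from rfl] at h1
      rw [h1, inv_one]
    obtain ⟨i, _, hi⟩ := hζu.eq_pow_of_mem_rootsOfUnity
      ((mem_rootsOfUnity _ _).mpr hpow)
    refine ⟨(i : ZMod (Nat.gcd n m)), ?_⟩
    have hχk : χ ((i : ZMod (Nat.gcd n m))) = - β f0 := by
      have h1 : χ (((i : ℤ) : ZMod (Nat.gcd n m))) = Additive.ofMul (ζu ^ (i : ℤ)) := hχ i
      rw [Int.cast_natCast] at h1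
      rw [h1, zpow_natCast, hi, ofMul_inv, ofMul_toMul]
    set k : ZMod (Nat.gcd n m) := (i : ZMod (Nat.gcd n m)) with hkdef
    -- the difference is a symmetric cocycle
    set h : G × G → Additive ℂˣ := fun p => f0 p - c k p with hhdef
    have hhco : IsTrivCo h := by
      intro a b d
      have h1 := hf a b d
      have h2 := hc_co k a b d
      simp only [hhdef]
      linear_combination (norm := abel1) h1 - h2
    have hh0 : bf h x₀ y₀ = 0 := by
      have : bf h x₀ y₀ = bf f0 x₀ y₀ - bf (c k) x₀ y₀ := by
        simp only [bf, hhdef]; abel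
      rw [this, show bf (c k) x₀ y₀ = β (c k) from rfl, hβc k, hχk,
        show bf f0 x₀ y₀ = β f0 from rfl]
      abel
    obtain ⟨x, hx⟩ := symm_trivco_coboundary baer_units_complex hhco (fun a b => by
      have := hsymm_of h hhco hh0 a b; exact this)
    -- conclude
    have hmem' : (⇑((⟨c k, hc_mem k⟩ : cocycles₂ A) - F) : G × G → Additive ℂˣ) ∈ coboundaries₂ A := by
      rw [cob_iff_aux]
      refine ⟨fun g => - x g, fun a b => ?_⟩
      have h1 : x b - x (a * b) + x a = f0 (a, b) - c k (a, b) := hx a b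
      have h2 : (⇑((⟨c k, hc_mem k⟩ : cocycles₂ A) - F) : G × G → Additive ℂˣ) (a, b)
          = c k (a, b) - f0 (a, b) := by
        show (⟨c k, hc_mem k⟩ : cocycles₂ A) (a, b) - F (a, b) = c k (a, b) - f0 (a, b)
        rw [congrFun hf0 (a, b)]
        rfl
      show - x b - - x (a * b) + - x a
          = (⇑((⟨c k, hc_mem k⟩ : cocycles₂ A) - F) : G × G → Additive ℂˣ) (a, b)
      rw [h2]
      linear_combination (norm := abel1) - h1
    show groupCohomology.H2π A ⟨c k, hc_mem k⟩ = H2π A F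
    exact (H2π_eq_iff _ _).mpr hmem'
  exact ⟨(AddEquiv.ofBijective Φ ⟨hinj, hsurj⟩).symm⟩
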